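/- Under the standing assumptions, for every θ ∈ ℝ^d, every 0 < λ < 1 and every ε_h ∈ (0,1/2], the tamed coefficient satisfies the dissipativity bound ⟨h_λ(θ), θ⟩ ≥ a|θ|² − b. -/

import Mathlib

open Real

theorem kTULA_tamed_dissipativity
    {d : ℕ} (hd : 0 < d)
    (u : EuclideanSpace ℝ (Fin d) → ℝ) (hu : ContDiff ℝ 3 u)
    (h : EuclideanSpace ℝ (Fin d) → EuclideanSpace ℝ (Fin d))
    (H : EuclideanSpace ℝ (Fin d) →
      EuclideanSpace ℝ (Fin d) →L[ℝ] EuclideanSpace ℝ (Fin d))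
    (hgrad : ∀ θ, h θ = gradient u θ)
    (hHess : ∀ θ, H θ = fderiv ℝ (gradient u) θ)
    (L K_H K_h a b : ℝ)
    (hL : 0 < L) (hK_H : 0 < K_H) (hK_h : 0 < K_h) (ha : 0 < a) (hb : 0 < b)
    (l : ℕ) (hl : 1 ≤ l)
    (hH_lip : ∀ θ θ' : EuclideanSpace ℝ (Fin d),
      ‖H θ - H θ'‖ ≤ L * (1 + ‖θ‖ + ‖θ'‖) ^ (l - 1) * ‖θ - θ'‖)
    (hH_bd : ∀ θ : EuclideanSpace ℝ (Fin d), ‖H θ‖ ≤ K_H * (1 + ‖θ‖ ^ l))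
    (hh_bd : ∀ θ : EuclideanSpace ℝ (Fin d), ‖h θ‖ ≤ K_h * (1 + ‖θ‖ ^ (l + 1)))
    (hdiss : ∀ θ : EuclideanSpace ℝ (Fin d), a * ‖θ‖ ^ 2 - b ≤ (inner ℝ (h θ) θ : ℝ))
    (hlam : ℝ → ℝ → EuclideanSpace ℝ (Fin d) → EuclideanSpace ℝ (Fin d))
    (hlam_def : ∀ (lam eps : ℝ) (θ : EuclideanSpace ℝ (Fin d)),
      hlam lam eps θ =
        a • θ + ((1 + lam * ‖θ‖ ^ (((l : ℝ) + 1) / eps)) ^ eps)⁻¹ • (h θ - a • θ)) :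
    ∀ (θ : EuclideanSpace ℝ (Fin d)) (lam eps : ℝ),
      0 < lam → lam < 1 → 0 < eps → eps ≤ 1 / 2 →
      a * ‖θ‖ ^ 2 - b ≤ (inner ℝ (hlam lam eps θ) θ : ℝ) := by
  intro θ lam eps hlam0 hlam1 heps0 heps1
  rw [hlam_def]
  set c : ℝ := (1 + lam * ‖θ‖ ^ (((l : ℝ) + 1) / eps)) ^ eps with hc
  have hbase : (1:ℝ) ≤ 1 + lam * ‖θ‖ ^ (((l : ℝ) + 1) / eps) := by
    have : 0 ≤ lam * ‖θ‖ ^ (((l : ℝ) + 1) / eps) :=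
      mul_nonneg hlam0.le (Real.rpow_nonneg (norm_nonneg θ) _)
    linarith
  have hc1 : (1:ℝ) ≤ c := Real.one_le_rpow hbase heps0.le
  have hcpos : (0:ℝ) < c := lt_of_lt_of_le one_pos hc1
  have hinv1 : c⁻¹ ≤ 1 := inv_le_one_of_one_le₀ hc1
  have hinvpos : 0 < c⁻¹ := inv_pos.mpr hcpos
  have key : (inner ℝ (a • θ + c⁻¹ • (h θ - a • θ)) θ : ℝ)
      = a * ‖θ‖ ^ 2 + c⁻¹ * ((inner ℝ (h θ) θ : ℝ) - a * ‖θ‖ ^ 2) := by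
    simp only [inner_add_left, inner_sub_left, real_inner_smul_left,
      real_inner_self_eq_norm_sq]
  rw [key]
  have h1 : -b ≤ (inner ℝ (h θ) θ : ℝ) - a * ‖θ‖ ^ 2 := by
    have := hdiss θ; linarith
  have h2 : c⁻¹ * (-b) ≤ c⁻¹ * ((inner ℝ (h θ) θ : ℝ) - a * ‖θ‖ ^ 2) :=
    mul_le_mul_of_nonneg_left h1 hinvpos.le
  have h3 : -b ≤ c⁻¹ * (-b) := by nlinarith
  linarith
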